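/- Let G be an abelian group of exponent 2 or 3, and let A, S ⊆ G be finite non-empty subsets. Let H = ⟨S⟩ be the subgroup generated by S and n = rk H its rank, and let γ ∈ (0,1] be real. If ∂_S(A) ≤ (1-γ)·n·|A|, then |A| ≥ |H|^γ. -/

import Mathlib

/-- The edge boundary of `A` with respect to `S`:
`∂_S(A) = |{(a,s) ∈ A × S : a + s ∉ A}|`. -/
def edgeBoundary {G : Type*} [AddCommGroup G] [DecidableEq G] (A S : Finset G) : ℕ :=
  ((A ×ˢ S).filter (fun p => p.1 + p.2 ∉ A)).card

open Real Finset AddSubgroup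



lemma jensenU (u₁ u₂ u₃ x₁ x₂ x₃ : ℝ) (hu₁ : 0 ≤ u₁) (hu₂ : 0 ≤ u₂) (hu₃ : 0 ≤ u₃)
    (hx₁ : 0 ≤ x₁) (hx₂ : 0 ≤ x₂) (hx₃ : 0 ≤ x₃) (hU : 0 < u₁ + u₂ + u₃) :
    u₁ * negMulLog x₁ + u₂ * negMulLog x₂ + u₃ * negMulLog x₃ ≤
      (u₁ + u₂ + u₃) * negMulLog ((u₁ * x₁ + u₂ * x₂ + u₃ * x₃) / (u₁ + u₂ + u₃)) := by
  have hUne : u₁ + u₂ + u₃ ≠ 0 := ne_of_gt hU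
  have hsum : (u₁/(u₁+u₂+u₃)) + (u₂/(u₁+u₂+u₃)) + (u₃/(u₁+u₂+u₃)) = 1 := by
    field_simp
  have h := Real.concaveOn_negMulLog.le_map_sum (t := (Finset.univ : Finset (Fin 3)))
    (w := ![u₁/(u₁+u₂+u₃), u₂/(u₁+u₂+u₃), u₃/(u₁+u₂+u₃)]) (p := ![x₁, x₂, x₃])
    (fun i _ => by fin_cases i <;>
      exact div_nonneg (by assumption) hU.le)
    (by rw [Fin.sum_univ_three]; exact hsum)
    (fun i _ => by fin_cases i <;> simp only [Matrix.cons_val_zero, Matrix.cons_val_one,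
      Matrix.head_cons, Matrix.cons_val_two, Matrix.tail_cons, Set.mem_Ici] <;> assumption)
  rw [Fin.sum_univ_three, Fin.sum_univ_three] at h
  simp only [Matrix.cons_val_zero, Matrix.cons_val_one, Matrix.head_cons,
    Matrix.cons_val_two, Matrix.tail_cons, smul_eq_mul] at h
  have h2 : u₁/(u₁+u₂+u₃) * x₁ + u₂/(u₁+u₂+u₃) * x₂ + u₃/(u₁+u₂+u₃) * x₃
      = (u₁ * x₁ + u₂ * x₂ + u₃ * x₃) / (u₁+u₂+u₃) := by ring
  rw [h2] at h
  have h3 := mul_le_mul_of_nonneg_left h hU.le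
  have h4 : (u₁+u₂+u₃) * (u₁/(u₁+u₂+u₃) * negMulLog x₁ + u₂/(u₁+u₂+u₃) * negMulLog x₂
      + u₃/(u₁+u₂+u₃) * negMulLog x₃)
      = u₁ * negMulLog x₁ + u₂ * negMulLog x₂ + u₃ * negMulLog x₃ := by
    field_simp
  rw [h4] at h3
  exact h3

lemma log3_le_two_log2 : Real.log 3 ≤ 2 * Real.log 2 := by
  have h4 : Real.log 4 = 2 * Real.log 2 := by
    rw [show (4:ℝ) = 2^2 by norm_num, Real.log_pow]; push_cast; ring
  rw [← h4]
  exact Real.log_le_log (by norm_num) (by norm_num)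

/-- Key entropy inequality for `p = 2`. -/
lemma star2 (a b : ℝ) (hb : 0 ≤ b) (hba : b ≤ a) :
    2 * b * Real.log 2 ≤
      (a + b) * Real.log (a + b) - a * Real.log a - b * Real.log b := by
  rcases eq_or_lt_of_le (le_trans hb hba) with h0 | ha
  · have hb0 : b = 0 := le_antisymm (h0 ▸ hba) hb
    simp [← h0, hb0]
  set T := a + b with hTdef
  have hT : 0 < T := by linarith
  have j1 := jensenU (a - b) (2*b) 0 T (T/2) 0 (by linarith) (by linarith) le_rfl
    hT.le (by linarith) le_rfl (by linarith)
  have j2 := jensenU (a - b) (2*b) 0 0 (T/2) 0 (by linarith) (by linarith) le_rfl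
    le_rfl (by linarith) le_rfl (by linarith)
  have e1 : (a - b) * T + 2*b * (T/2) + 0 * 0 = a * T := by ring
  have e2 : (a - b) * 0 + 2*b * (T/2) + 0 * 0 = b * T := by ring
  have eU : a - b + 2*b + 0 = T := by ring
  rw [e1, eU] at j1
  rw [e2, eU] at j2
  rw [mul_div_assoc, div_self (ne_of_gt hT), mul_one] at j1 j2
  have l2 : Real.log (T/2) = Real.log T - Real.log 2 := Real.log_div (ne_of_gt hT) two_ne_zero
  simp only [Real.negMulLog, l2] at j1 j2
  rw [← mul_le_mul_iff_right₀ hT]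
  rw [hTdef] at j1 j2 ⊢
  linarith [j1, j2]

/-- Key entropy inequality for `p = 3`. -/
lemma star3 (a b c : ℝ) (hc : 0 ≤ c) (hcb : c ≤ b) (hba : b ≤ a) :
    (b + 2*c) * Real.log 3 ≤
      (a + b + c) * Real.log (a + b + c)
        - a * Real.log a - b * Real.log b - c * Real.log c := by
  rcases eq_or_lt_of_le (le_trans hc (le_trans hcb hba)) with h0 | ha
  · have hb0 : b = 0 := le_antisymm (h0 ▸ hba) (le_trans hc hcb)
    have hc0 : c = 0 := le_antisymm (hb0 ▸ hcb) hc
    simp [← h0, hb0, hc0]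
  set T := a + b + c with hTdef
  have hT : 0 < T := by linarith
  have hU : (0:ℝ) < a - b + 2*(b-c) + 3*c := by linarith
  have j1 := jensenU (a-b) (2*(b-c)) (3*c) T (T/2) (T/3) (by linarith) (by linarith)
    (by linarith) hT.le (by linarith) (by linarith) hU
  have j2 := jensenU (a-b) (2*(b-c)) (3*c) 0 (T/2) (T/3) (by linarith) (by linarith)
    (by linarith) le_rfl (by linarith) (by linarith) hU
  have j3 := jensenU (a-b) (2*(b-c)) (3*c) 0 0 (T/3) (by linarith) (by linarith)
    (by linarith) le_rfl le_rfl (by linarith) hU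
  have e1 : (a-b) * T + 2*(b-c) * (T/2) + 3*c * (T/3) = a * T := by ring
  have e2 : (a-b) * 0 + 2*(b-c) * (T/2) + 3*c * (T/3) = b * T := by ring
  have e3 : (a-b) * 0 + 2*(b-c) * 0 + 3*c * (T/3) = c * T := by ring
  have eU : a - b + 2*(b-c) + 3*c = T := by ring
  rw [e1, eU] at j1
  rw [e2, eU] at j2
  rw [e3, eU] at j3
  rw [mul_div_assoc, div_self (ne_of_gt hT), mul_one] at j1 j2 j3
  have l2 : Real.log (T/2) = Real.log T - Real.log 2 := Real.log_div (ne_of_gt hT) two_ne_zero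
  have l3 : Real.log (T/3) = Real.log T - Real.log 3 := Real.log_div (ne_of_gt hT) three_ne_zero
  have hlog := log3_le_two_log2
  simp only [Real.negMulLog, l2, l3] at j1 j2 j3
  have hprod : 0 ≤ (T * (b - c)) * (2 * Real.log 2 - Real.log 3) :=
    mul_nonneg (mul_nonneg hT.le (by linarith)) (by linarith)
  rw [← mul_le_mul_iff_right₀ hT]
  rw [hTdef] at j1 j2 j3 hprod ⊢
  linarith [j1, j2, j3, hprod]




/-- `u * log (N / u) = u * log N - u * log u`, valid for all `u` (conventionally at `0`). -/
lemma mul_log_div_eq (N u : ℝ) (hN : N ≠ 0) :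
    u * Real.log (N / u) = u * Real.log N - u * Real.log u := by
  rcases eq_or_ne u 0 with rfl | hu
  · simp
  · rw [Real.log_div hN hu]; ring

lemma sorted_ineq (q : ℝ) (hq : q = 2 ∨ q = 3) (N' x y z D T : ℝ) (hN' : 1 ≤ N')
    (hz : 0 ≤ z) (hzy : z ≤ y) (hyx : y ≤ x)
    (hD2 : q = 2 → x - y ≤ D) (hD3 : q = 3 → x - z ≤ D)
    (hT : T = x + y + z) (hq3 : q = 2 → z = 0) :
    T * Real.logb q (q * N' / T) ≤
      D + x * Real.logb q (N' / x) + y * Real.logb q (N' / y) + z * Real.logb q (N' / z) := by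
  have hN'0 : (0:ℝ) < N' := lt_of_lt_of_le one_pos hN'
  have hq1 : (1:ℝ) < q := by rcases hq with rfl | rfl <;> norm_num
  have hlogq : 0 < Real.log q := Real.log_pos hq1
  have hD0 : 0 ≤ D := by
    rcases hq with rfl | rfl
    · have := hD2 rfl; linarith
    · have := hD3 rfl; linarith
  rcases eq_or_lt_of_le (le_trans hz (le_trans hzy hyx)) with h0 | hx0
  · -- x = 0, so all are 0
    have hx : x = 0 := h0.symm
    have hy : y = 0 := le_antisymm (hx ▸ hyx) (le_trans hz hzy)
    have hzz : z = 0 := le_antisymm (hy ▸ hzy) hz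
    rw [hT, hx, hy, hzz]
    simpa using hD0
  · -- main case
    have hT0 : 0 < T := by rw [hT]; linarith
    -- key inequality in terms of natural logs
    have key : T * Real.log (q * N' / T) ≤
        D * Real.log q + x * Real.log (N' / x) + y * Real.log (N' / y)
          + z * Real.log (N' / z) := by
      have e1 : T * Real.log (q * N' / T) =
          T * Real.log q + T * Real.log N' - T * Real.log T := by
        rw [Real.log_div (by positivity) (ne_of_gt hT0), Real.log_mul (by positivity)
          (ne_of_gt hN'0)]
        ring
      rw [e1, mul_log_div_eq N' x (ne_of_gt hN'0), mul_log_div_eq N' y (ne_of_gt hN'0),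
        mul_log_div_eq N' z (ne_of_gt hN'0)]
      rcases hq with rfl | rfl
      · have hz0 : z = 0 := hq3 rfl
        have hDq : (x - y) * Real.log 2 ≤ D * Real.log 2 :=
          mul_le_mul_of_nonneg_right (hD2 rfl) hlogq.le
        have hs := star2 x y (by linarith) hyx
        rw [hT, hz0]
        simp only [Real.log_zero, add_zero, mul_zero, zero_mul, sub_zero]
        nlinarith [hs, hDq]
      · have hDq : (x - z) * Real.log 3 ≤ D * Real.log 3 :=
          mul_le_mul_of_nonneg_right (hD3 rfl) hlogq.le
        have hs := star3 x y z hz hzy hyx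
        rw [hT]
        nlinarith [hs, hDq]
    -- convert to logb
    have conv : ∀ u v : ℝ, u * Real.logb q v = u * Real.log v / Real.log q := by
      intro u v; rw [Real.logb]; ring
    rw [conv, conv, conv, conv]
    calc T * Real.log (q * N' / T) / Real.log q
        ≤ (D * Real.log q + x * Real.log (N' / x) + y * Real.log (N' / y)
            + z * Real.log (N' / z)) / Real.log q := (div_le_div_iff_of_pos_right hlogq).2 key
      _ = D + x * Real.log (N' / x) / Real.log q + y * Real.log (N' / y) / Real.log q
            + z * Real.log (N' / z) / Real.log q := by
          field_simp


lemma cyclic_ineq (p : ℕ) (hp : p = 2 ∨ p = 3) (N' : ℝ) (hN' : 1 ≤ N')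
    (a d : ℕ → ℝ) (ha : ∀ j, 0 ≤ a j) (hd : ∀ j, 0 ≤ d j)
    (hstep : ∀ j, j < p → a j ≤ a ((j + 1) % p) + d j) :
    (∑ j ∈ Finset.range p, a j) * Real.logb p (p * N' / (∑ j ∈ Finset.range p, a j)) ≤
      (∑ j ∈ Finset.range p, d j) + ∑ j ∈ Finset.range p, a j * Real.logb p (N' / a j) := by
  have no23 : (2:ℝ) ≠ 3 := by norm_num
  have no32 : (3:ℝ) ≠ 2 := by norm_num
  rcases hp with rfl | rfl
  · have h0 := hstep 0 (by norm_num)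
    have h1 := hstep 1 (by norm_num)
    norm_num at h0 h1
    simp only [Finset.sum_range_succ, Finset.sum_range_zero, zero_add, Nat.cast_ofNat]
    rcases le_total (a 1) (a 0) with hle | hle
    · have := sorted_ineq 2 (Or.inl rfl) N' (a 0) (a 1) 0 (d 0 + d 1) (a 0 + a 1) hN'
        le_rfl (ha 1) hle (fun _ => by linarith [h0, hd 1]) (fun h => absurd h no23)
        (by ring) (fun _ => rfl)
      simp only [Real.logb] at this ⊢
      linarith [this]
    · have := sorted_ineq 2 (Or.inl rfl) N' (a 1) (a 0) 0 (d 0 + d 1) (a 0 + a 1) hN'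
        le_rfl (ha 0) hle (fun _ => by linarith [h1, hd 0]) (fun h => absurd h no23)
        (by ring) (fun _ => rfl)
      simp only [Real.logb] at this ⊢
      linarith [this]
  · have h0 := hstep 0 (by norm_num)
    have h1 := hstep 1 (by norm_num)
    have h2 := hstep 2 (by norm_num)
    norm_num at h0 h1 h2
    simp only [Finset.sum_range_succ, Finset.sum_range_zero, zero_add, Nat.cast_ofNat]
    rcases le_total (a 0) (a 1) with p01 | p01 <;> rcases le_total (a 0) (a 2) with p02 | p02 <;>
      rcases le_total (a 1) (a 2) with p12 | p12
    · have := sorted_ineq 3 (Or.inr rfl) N' (a 2) (a 1) (a 0) (d 0 + d 1 + d 2)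
        (a 0 + a 1 + a 2) hN' (ha 0) p01 p12 (fun h => absurd h no32)
        (fun _ => by linarith [h2, hd 0, hd 1]) (by ring) (fun h => absurd h no32)
      simp only [Real.logb] at this ⊢
      linarith [this]
    · have := sorted_ineq 3 (Or.inr rfl) N' (a 1) (a 2) (a 0) (d 0 + d 1 + d 2)
        (a 0 + a 1 + a 2) hN' (ha 0) p02 p12 (fun h => absurd h no32)
        (fun _ => by linarith [h1, h2, hd 0]) (by ring) (fun h => absurd h no32)
      simp only [Real.logb] at this ⊢
      linarith [this]
    · have := sorted_ineq 3 (Or.inr rfl) N' (a 0) (a 2) (a 1) (d 0 + d 1 + d 2)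
        (a 0 + a 1 + a 2) hN' (ha 1) p12 p02 (fun h => absurd h no32)
        (fun _ => by linarith [h0, hd 1, hd 2]) (by ring) (fun h => absurd h no32)
      simp only [Real.logb] at this ⊢
      linarith [this]
    · have := sorted_ineq 3 (Or.inr rfl) N' (a 1) (a 0) (a 2) (d 0 + d 1 + d 2)
        (a 0 + a 1 + a 2) hN' (ha 2) p02 p01 (fun h => absurd h no32)
        (fun _ => by linarith [h1, hd 0, hd 2]) (by ring) (fun h => absurd h no32)
      simp only [Real.logb] at this ⊢
      linarith [this]
    · have := sorted_ineq 3 (Or.inr rfl) N' (a 2) (a 0) (a 1) (d 0 + d 1 + d 2)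
        (a 0 + a 1 + a 2) hN' (ha 1) p01 p02 (fun h => absurd h no32)
        (fun _ => by linarith [h0, h2, hd 1]) (by ring) (fun h => absurd h no32)
      simp only [Real.logb] at this ⊢
      linarith [this]
    · have := sorted_ineq 3 (Or.inr rfl) N' (a 0) (a 1) (a 2) (d 0 + d 1 + d 2)
        (a 0 + a 1 + a 2) hN' (ha 2) p12 p01 (fun h => absurd h no32)
        (fun _ => by linarith [h0, h1, hd 2]) (by ring) (fun h => absurd h no32)
      simp only [Real.logb] at this ⊢
      linarith [this]
    · have := sorted_ineq 3 (Or.inr rfl) N' (a 0) (a 2) (a 1) (d 0 + d 1 + d 2)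
        (a 0 + a 1 + a 2) hN' (ha 1) p12 p02 (fun h => absurd h no32)
        (fun _ => by linarith [h0, hd 1, hd 2]) (by ring) (fun h => absurd h no32)
      simp only [Real.logb] at this ⊢
      linarith [this]
    · have := sorted_ineq 3 (Or.inr rfl) N' (a 0) (a 1) (a 2) (d 0 + d 1 + d 2)
        (a 0 + a 1 + a 2) hN' (ha 2) p12 p01 (fun h => absurd h no32)
        (fun _ => by linarith [h0, h1, hd 2]) (by ring) (fun h => absurd h no32)
      simp only [Real.logb] at this ⊢
      linarith [this]



section Aux
variable {G : Type*} [AddCommGroup G] [DecidableEq G]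

/-- The edge boundary as a sum over directions. -/
lemma edgeBoundary_eq_sum' (A S : Finset G) :
    ((A ×ˢ S).filter (fun p => p.1 + p.2 ∉ A)).card
      = ∑ s ∈ S, (A.filter (fun a => a + s ∉ A)).card := by
  rw [Finset.card_eq_sum_card_fiberwise (f := Prod.snd) (t := S)
    (fun x hx => (Finset.mem_product.1 (Finset.mem_filter.1 hx).1).2)]
  refine Finset.sum_congr rfl (fun s hs => ?_)
  refine Finset.card_bij (fun x _ => x.1) ?_ ?_ ?_
  · intro x hx
    simp only [Finset.mem_filter, Finset.mem_product] at hx ⊢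
    obtain ⟨⟨⟨hx1, _⟩, hx2⟩, hx3⟩ := hx
    exact ⟨hx1, hx3 ▸ hx2⟩
  · intro x hx y hy hxy
    simp only [Finset.mem_filter] at hx hy
    exact Prod.ext hxy (hx.2.trans hy.2.symm)
  · intro a ha
    simp only [Finset.mem_filter, Finset.mem_product] at ha ⊢
    exact ⟨(a, s), ⟨⟨⟨ha.1, hs⟩, ha.2⟩, rfl⟩, rfl⟩

lemma closure_finset_finite (p : ℕ) (hp : 0 < p) (htor : ∀ g : G, p • g = 0) (L : Finset G) :
    ((closure (L : Set G) : AddSubgroup G) : Set G).Finite := by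
  classical
  induction L using Finset.induction_on with
  | empty =>
      rw [Finset.coe_empty, AddSubgroup.closure_empty, AddSubgroup.coe_bot]
      exact Set.finite_singleton 0
  | @insert s L' hs IH =>
      rw [Finset.coe_insert, Set.insert_eq, AddSubgroup.closure_union,
        ← AddSubgroup.zmultiples_eq_closure]
      have hzfin : ((zmultiples s : AddSubgroup G) : Set G).Finite :=
        (isOfFinAddOrder_iff_nsmul_eq_zero.2 ⟨p, hp, htor s⟩).finite_zmultiples
      refine Set.Finite.subset (Set.Finite.image2 (· + ·) hzfin IH) ?_
      intro x hx
      rcases AddSubgroup.mem_sup.1 hx with ⟨y, hy, z, hz, hyz⟩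
      exact ⟨y, hy, z, hz, hyz⟩

end Aux




/-- Main isoperimetric lemma for a set contained in a single coset of the closure. -/
lemma main_coset {G : Type*} [AddCommGroup G] [DecidableEq G]
    (p : ℕ) (hp : p = 2 ∨ p = 3) (htor : ∀ g : G, p • g = 0) (L : Finset G) :
    ∀ (A : Finset G) (g : G), (∀ a ∈ A, a - g ∈ closure (L : Set G)) →
    (A.card : ℝ) * Real.logb p ((Nat.card (closure (L : Set G)) : ℝ) / (A.card : ℝ)) ≤
      ∑ s ∈ L, ((A.filter (fun a => a + s ∉ A)).card : ℝ) := by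
  classical
  have hp0 : 0 < p := by rcases hp with rfl | rfl <;> norm_num
  have hp1 : (1:ℝ) < (p:ℝ) := by rcases hp with rfl | rfl <;> norm_num
  induction L using Finset.induction_on with
  | empty =>
      intro A g hcos
      have hsub : A ⊆ {g} := by
        intro a ha
        have h := hcos a ha
        rw [Finset.coe_empty, AddSubgroup.closure_empty, AddSubgroup.mem_bot, sub_eq_zero] at h
        simp [h]
      have hcard : A.card ≤ 1 := (Finset.card_le_card hsub).trans (by simp)
      rw [Finset.coe_empty, AddSubgroup.closure_empty, AddSubgroup.card_bot]
      interval_cases h : A.card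
      · simp
      · norm_num
  | @insert s L' hsL' IH =>
      intro A g hcos
      rw [Finset.sum_insert hsL']
      rw [Finset.coe_insert] at hcos ⊢
      by_cases hsH' : s ∈ closure (L' : Set G)
      · -- redundant generator
        have hHeq : closure (insert s (L' : Set G)) = closure (L' : Set G) := by
          refine le_antisymm (closure_le _ |>.2 ?_) (closure_mono (Set.subset_insert s _))
          exact Set.insert_subset hsH' subset_closure
        rw [hHeq]
        have := IH A g (fun a ha => hHeq ▸ hcos a ha)
        have hnn : (0:ℝ) ≤ ((A.filter (fun a => a + s ∉ A)).card : ℝ) := by positivity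
        linarith [this]
      · -- independent generator
        have hps : p • s = 0 := htor s
        set H' := closure (L' : Set G) with hH'def
        -- `d • s ∈ H'` forces `d = 0` for `d < p`
        have hstep0 : ∀ d : ℕ, d < p → d • s ∈ H' → d = 0 := by
          intro d hd hds
          rcases hp with rfl | rfl
          · interval_cases d
            · rfl
            · rw [one_nsmul] at hds; exact absurd hds hsH'
          · interval_cases d
            · rfl
            · rw [one_nsmul] at hds; exact absurd hds hsH'
            · exfalso
              have h4 : (2:ℕ) • ((2:ℕ) • s) ∈ H' := H'.nsmul_mem hds 2
              have he : (2:ℕ) • ((2:ℕ) • s) = s := by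
                rw [smul_smul, show (2*2 : ℕ) = 3 + 1 by norm_num, add_nsmul, htor s,
                  one_nsmul, zero_add]
              rw [he] at h4
              exact absurd h4 hsH'
        have hjeq : ∀ j₁ j₂ : ℕ, j₁ < p → j₂ < p → j₁ • s - j₂ • s ∈ H' → j₁ = j₂ := by
          have haux : ∀ j₁ j₂ : ℕ, j₁ ≤ j₂ → j₂ < p → j₂ • s - j₁ • s ∈ H' → j₁ = j₂ := by
            intro j₁ j₂ hle hlt hmem
            have h1 : (j₂ - j₁) • s ∈ H' := by
              rw [sub_nsmul s hle, ← sub_eq_add_neg]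
              exact hmem
            have h2 := hstep0 (j₂ - j₁) (lt_of_le_of_lt (Nat.sub_le _ _) hlt) h1
            omega
          intro j₁ j₂ h1 h2 hmem
          rcases le_total j₁ j₂ with h | h
          · exact haux j₁ j₂ h h2 (by rwa [← neg_sub, neg_mem_iff] at hmem)
          · exact (haux j₂ j₁ h h1 hmem).symm
        -- existence of a slice index for elements of the sup
        have hex0 : ∀ x : G, x ∈ zmultiples s ⊔ H' → ∃ j, j < p ∧ x - j • s ∈ H' := by
          intro x hx
          rcases AddSubgroup.mem_sup.1 hx with ⟨y, hy, z, hz, hyz⟩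
          rcases AddSubgroup.mem_zmultiples_iff.1 hy with ⟨k, hk⟩
          have h1 : (0:ℤ) ≤ k % p := Int.emod_nonneg k (by exact_mod_cast hp0.ne')
          have h2 : k % p < p := Int.emod_lt_of_pos k (by exact_mod_cast hp0)
          refine ⟨(k % p).toNat, by omega, ?_⟩
          have hks : ((k % p).toNat) • s = k • s := by
            rw [← natCast_zsmul, Int.toNat_of_nonneg h1]
            have hdm : k = p * (k / p) + k % p := (Int.mul_ediv_add_emod k p).symm
            have hzero : (p * (k / p)) • s = 0 := by
              rw [mul_comm, mul_zsmul, natCast_zsmul, hps, smul_zero]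
            calc (k % p) • s = (p * (k / p)) • s + (k % p) • s := by rw [hzero, zero_add]
              _ = (p * (k / p) + k % p) • s := (add_zsmul s _ _).symm
              _ = k • s := by rw [← hdm]
          have hxz : x - ((k % p).toNat) • s = z := by
            rw [hks, ← hyz, ← hk]; abel
          rw [hxz]; exact hz
        -- membership of `A` elements in the sup
        have hcos' : ∀ a ∈ A, a - g ∈ zmultiples s ⊔ H' := by
          intro a ha
          have h1 := hcos a ha
          rwa [Set.insert_eq, AddSubgroup.closure_union, ← AddSubgroup.zmultiples_eq_closure]
            at h1
        have hex : ∀ a ∈ A, ∃ j, j < p ∧ a - g - j • s ∈ H' := by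
          intro a ha
          rcases hex0 (a - g) (hcos' a ha) with ⟨j, hj, hjm⟩
          exact ⟨j, hj, hjm⟩
        -- the slices
        set Aj : ℕ → Finset G := fun j => A.filter (fun a => a - g - j • s ∈ H') with hAjdef
        have hmemAj : ∀ j a, a ∈ Aj j ↔ a ∈ A ∧ a - g - j • s ∈ H' := by
          intro j a; rw [hAjdef]; exact Finset.mem_filter
        have huniq : ∀ (x : G) (j₁ j₂ : ℕ), j₁ < p → j₂ < p →
            x - g - j₁ • s ∈ H' → x - g - j₂ • s ∈ H' → j₁ = j₂ := by
          intro x j₁ j₂ h1 h2 m1 m2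
          refine (hjeq j₂ j₁ h2 h1 ?_).symm
          have h3 := H'.sub_mem m1 m2
          have he : x - g - j₁ • s - (x - g - j₂ • s) = j₂ • s - j₁ • s := by abel
          rwa [he] at h3
        have hdisj : ∀ j₁ ∈ range p, ∀ j₂ ∈ range p, j₁ ≠ j₂ → Disjoint (Aj j₁) (Aj j₂) := by
          intro j₁ hj1 j₂ hj2 hne
          rw [Finset.disjoint_left]
          intro a h1 h2
          rcases (hmemAj j₁ a).1 h1 with ⟨_, m1⟩
          rcases (hmemAj j₂ a).1 h2 with ⟨_, m2⟩
          exact hne (huniq a j₁ j₂ (mem_range.1 hj1) (mem_range.1 hj2) m1 m2)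
        have hcover : A = (range p).biUnion Aj := by
          ext a
          constructor
          · intro ha
            rcases hex a ha with ⟨j, hj, hjm⟩
            exact Finset.mem_biUnion.2 ⟨j, mem_range.2 hj, (hmemAj j a).2 ⟨ha, hjm⟩⟩
          · intro ha
            rcases Finset.mem_biUnion.1 ha with ⟨j, _, hja⟩
            exact ((hmemAj j a).1 hja).1
        have hfilter : ∀ (P : G → Prop) (inst : DecidablePred P),
            (A.filter P).card = ∑ j ∈ range p, ((Aj j).filter P).card := by
          intro P inst
          conv_lhs => rw [hcover]
          rw [Finset.filter_biUnion, Finset.card_biUnion]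
          intro j₁ hj1 j₂ hj2 hne
          exact (hdisj j₁ hj1 j₂ hj2 hne).mono (Finset.filter_subset _ _)
            (Finset.filter_subset _ _)
        have hcardsum : A.card = ∑ j ∈ range p, (Aj j).card := by
          conv_lhs => rw [hcover]
          exact Finset.card_biUnion hdisj
        -- finiteness and cardinality
        have hfin' : ((H' : AddSubgroup G) : Set G).Finite := closure_finset_finite p hp0 htor L'
        haveI hfinH' : Finite H' := hfin'.to_subtype
        have hN'pos : 0 < Nat.card H' := Nat.card_pos
        have hNcard : Nat.card (closure (insert s (L' : Set G))) = p * Nat.card H' := by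
          rw [Set.insert_eq, AddSubgroup.closure_union, ← AddSubgroup.zmultiples_eq_closure,
            ← hH'def]
          have hf : ∀ x : H' × Fin p, ((x.1 : G) + (x.2 : ℕ) • s) ∈ zmultiples s ⊔ H' := by
            intro x
            exact add_mem (AddSubgroup.mem_sup_right x.1.2)
              (AddSubgroup.mem_sup_left (AddSubgroup.mem_zmultiples_iff.2
                ⟨((x.2 : ℕ) : ℤ), natCast_zsmul s _⟩))
          have hbij : Function.Bijective
              (fun x : H' × Fin p => (⟨(x.1 : G) + (x.2 : ℕ) • s, hf x⟩ : ↥(zmultiples s ⊔ H'))) := by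
            constructor
            · rintro ⟨⟨h₁, hh₁⟩, j₁⟩ ⟨⟨h₂, hh₂⟩, j₂⟩ heq
              simp only [Subtype.mk_eq_mk] at heq
              have hjj : (j₁ : ℕ) = (j₂ : ℕ) := by
                refine hjeq _ _ j₁.2 j₂.2 ?_
                have he : (j₁ : ℕ) • s - (j₂ : ℕ) • s = h₂ - h₁ := by
                  rw [← sub_eq_zero] at heq ⊢
                  rw [← heq]; abel
                rw [he]
                exact H'.sub_mem hh₂ hh₁
              have hhh : h₁ = h₂ := by
                rw [hjj] at heq
                exact add_right_cancel heq
              simp [Prod.ext_iff, Subtype.ext_iff, hhh, Fin.ext_iff, hjj]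
            · rintro ⟨x, hx⟩
              rcases hex0 x hx with ⟨j, hj, hjm⟩
              refine ⟨⟨⟨x - j • s, hjm⟩, ⟨j, hj⟩⟩, ?_⟩
              simp only [Subtype.mk_eq_mk]
              abel
          have hc := Nat.card_congr (Equiv.ofBijective _ hbij)
          rw [← hc, Nat.card_prod, Nat.card_eq_fintype_card (α := Fin p), Fintype.card_fin,
            mul_comm]
        -- one-step boundary bound between consecutive slices
        have hstepcard : ∀ j, j < p →
            (Aj j).card ≤ (Aj ((j + 1) % p)).card
              + ((Aj j).filter (fun a => a + s ∉ A)).card := by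
          intro j hj
          have hsplit := Finset.card_filter_add_card_filter_not
            (s := Aj j) (p := fun a => a + s ∈ A)
          have hinj : ((Aj j).filter (fun a => a + s ∈ A)).card ≤ (Aj ((j + 1) % p)).card := by
            apply Finset.card_le_card_of_injOn (fun a => a + s)
            · intro a ha
              obtain ⟨haj, hasA⟩ := Finset.mem_filter.1 ha
              obtain ⟨haA, hsl⟩ := (hmemAj j a).1 haj
              refine (hmemAj _ _).2 ⟨hasA, ?_⟩
              rcases eq_or_lt_of_le (Nat.succ_le_of_lt hj) with hpe | hlt
              · have hpe' : j + 1 = p := by omega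
                rw [← hpe', Nat.mod_self]
                have he : a + s - g - (0:ℕ) • s = (a - g - j • s) + (j + 1) • s := by
                  rw [add_nsmul, one_nsmul, zero_nsmul]; abel
                rw [he, hpe', hps, add_zero]
                exact hsl
              · rw [Nat.mod_eq_of_lt hlt]
                have he : a + s - g - (j + 1) • s = a - g - j • s := by
                  rw [add_nsmul, one_nsmul]; abel
                rw [he]
                exact hsl
            · intro a _ b _ hab
              exact add_right_cancel hab
          omega
        -- the induction hypothesis applied to each slice
        have hIHj : ∀ j, j < p →
            ((Aj j).card : ℝ) * Real.logb p ((Nat.card H' : ℝ) / ((Aj j).card : ℝ))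
              ≤ ∑ s' ∈ L', (((Aj j).filter (fun a => a + s' ∉ A)).card : ℝ) := by
          intro j hj
          have hco : ∀ a ∈ Aj j, a - (g + j • s) ∈ H' := by
            intro a ha
            rw [sub_add_eq_sub_sub]
            exact ((hmemAj j a).1 ha).2
          have h1 := IH (Aj j) (g + j • s) hco
          refine le_trans h1 (le_of_eq (Finset.sum_congr rfl fun s' hs' => ?_))
          congr 1
          congr 1
          apply Finset.filter_congr
          intro a ha
          have hs'H : s' ∈ H' := AddSubgroup.subset_closure hs'
          have hiff : (a + s' ∈ Aj j) ↔ (a + s' ∈ A) := by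
            constructor
            · intro h; exact ((hmemAj j _).1 h).1
            · intro h
              refine (hmemAj j _).2 ⟨h, ?_⟩
              have he : a + s' - g - j • s = (a - g - j • s) + s' := by abel
              rw [he]
              exact H'.add_mem ((hmemAj j a).1 ha).2 hs'H
          exact not_congr hiff
        -- final assembly
        rw [hNcard]
        have hN'1 : (1:ℝ) ≤ (Nat.card H' : ℝ) := by exact_mod_cast hN'pos
        have hineq := cyclic_ineq p hp ((Nat.card H' : ℝ)) hN'1
          (fun j => ((Aj j).card : ℝ))
          (fun j => (((Aj j).filter (fun a => a + s ∉ A)).card : ℝ))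
          (fun j => Nat.cast_nonneg _) (fun j => Nat.cast_nonneg _)
          (fun j hj => by exact_mod_cast hstepcard j hj)
        have hAsum : (A.card : ℝ) = ∑ j ∈ range p, ((Aj j).card : ℝ) := by
          rw [hcardsum]; push_cast; rfl
        have hdsum : ((A.filter (fun a => a + s ∉ A)).card : ℝ)
            = ∑ j ∈ range p, (((Aj j).filter (fun a => a + s ∉ A)).card : ℝ) := by
          rw [hfilter _ _]; push_cast; rfl
        have hIHsum : ∑ j ∈ range p,
            ((Aj j).card : ℝ) * Real.logb p ((Nat.card H' : ℝ) / ((Aj j).card : ℝ))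
              ≤ ∑ s' ∈ L', ((A.filter (fun a => a + s' ∉ A)).card : ℝ) := by
          have h1 : ∑ j ∈ range p,
              ((Aj j).card : ℝ) * Real.logb p ((Nat.card H' : ℝ) / ((Aj j).card : ℝ))
                ≤ ∑ j ∈ range p, ∑ s' ∈ L',
                    (((Aj j).filter (fun a => a + s' ∉ A)).card : ℝ) :=
            Finset.sum_le_sum (fun j hj => hIHj j (mem_range.1 hj))
          refine le_trans h1 (le_of_eq ?_)
          rw [Finset.sum_comm]
          refine Finset.sum_congr rfl (fun s' _ => ?_)
          rw [hfilter (fun a => a + s' ∉ A) _]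
          push_cast; rfl
        calc (A.card : ℝ) * Real.logb p ((↑(p * Nat.card H') : ℝ) / (A.card : ℝ))
            = (∑ j ∈ range p, ((Aj j).card : ℝ)) * Real.logb p
                ((p : ℝ) * (Nat.card H' : ℝ) / (∑ j ∈ range p, ((Aj j).card : ℝ))) := by
              rw [← hAsum]; push_cast; ring_nf
          _ ≤ (∑ j ∈ range p, (((Aj j).filter (fun a => a + s ∉ A)).card : ℝ))
                + ∑ j ∈ range p, ((Aj j).card : ℝ) * Real.logb p
                    ((Nat.card H' : ℝ) / ((Aj j).card : ℝ)) := hineq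
          _ ≤ ((A.filter (fun a => a + s ∉ A)).card : ℝ)
                + ∑ s' ∈ L', ((A.filter (fun a => a + s' ∉ A)).card : ℝ) := by
              rw [hdsum]
              exact add_le_add le_rfl hIHsum




/-- Coset-free version of the main lemma. -/
lemma main_all {G : Type*} [AddCommGroup G] [DecidableEq G]
    (p : ℕ) (hp : p = 2 ∨ p = 3) (htor : ∀ g : G, p • g = 0) (L : Finset G) (A : Finset G) :
    (A.card : ℝ) * Real.logb p ((Nat.card (closure (L : Set G)) : ℝ) / (A.card : ℝ)) ≤
      ∑ s ∈ L, ((A.filter (fun a => a + s ∉ A)).card : ℝ) := by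
  classical
  have hp0 : 0 < p := by rcases hp with rfl | rfl <;> norm_num
  have hp1 : (1:ℝ) < (p:ℝ) := by rcases hp with rfl | rfl <;> norm_num
  have hfin : ((closure (L : Set G) : AddSubgroup G) : Set G).Finite :=
    closure_finset_finite p hp0 htor L
  haveI : Finite (closure (L : Set G)) := hfin.to_subtype
  have hNpos : 0 < Nat.card (closure (L : Set G)) := Nat.card_pos
  induction A using Finset.strongInduction with
  | _ A IH =>
    by_cases hone : ∀ a ∈ A, ∀ b ∈ A, a - b ∈ closure (L : Set G)
    · rcases A.eq_empty_or_nonempty with rfl | ⟨a₀, ha₀⟩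
      · simp
      · exact main_coset p hp htor L A a₀ (fun a ha => hone a ha a₀ ha₀)
    · push_neg at hone
      obtain ⟨a, ha, b, hb, hab⟩ := hone
      set A₁ := A.filter (fun x => x - b ∈ closure (L : Set G)) with hA₁
      set A₂ := A.filter (fun x => x - b ∉ closure (L : Set G)) with hA₂
      have hbA₁ : b ∈ A₁ := Finset.mem_filter.2 ⟨hb, by rw [sub_self]; exact zero_mem _⟩
      have haA₂ : a ∈ A₂ := Finset.mem_filter.2 ⟨ha, hab⟩
      have hA₁ss : A₁ ⊂ A := Finset.filter_ssubset.2 ⟨a, ha, hab⟩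
      have hA₂ss : A₂ ⊂ A := Finset.filter_ssubset.2 ⟨b, hb, not_not_intro (by rw [sub_self]; exact zero_mem _)⟩
      have hcards : A.card = A₁.card + A₂.card :=
        (Finset.card_filter_add_card_filter_not (p := fun x => x - b ∈ closure (L : Set G))).symm
      have h1pos : 0 < A₁.card := Finset.card_pos.2 ⟨b, hbA₁⟩
      have h2pos : 0 < A₂.card := Finset.card_pos.2 ⟨a, haA₂⟩
      -- boundary decomposes
      have hbd : ∀ s ∈ L, (A.filter (fun x => x + s ∉ A)).card
          = (A₁.filter (fun x => x + s ∉ A₁)).card + (A₂.filter (fun x => x + s ∉ A₂)).card := by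
        intro s hs
        have hsH : s ∈ closure (L : Set G) := subset_closure hs
        have hiff1 : ∀ x ∈ A₁, (x + s ∈ A ↔ x + s ∈ A₁) := by
          intro x hx
          obtain ⟨hxA, hxb⟩ := Finset.mem_filter.1 hx
          constructor
          · intro h
            refine Finset.mem_filter.2 ⟨h, ?_⟩
            have he : x + s - b = (x - b) + s := by abel
            rw [he]; exact add_mem hxb hsH
          · intro h; exact (Finset.mem_filter.1 h).1
        have hiff2 : ∀ x ∈ A₂, (x + s ∈ A ↔ x + s ∈ A₂) := by
          intro x hx
          obtain ⟨hxA, hxb⟩ := Finset.mem_filter.1 hx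
          constructor
          · intro h
            refine Finset.mem_filter.2 ⟨h, ?_⟩
            intro hmem
            apply hxb
            have he : x - b = (x + s - b) - s := by abel
            rw [he]; exact sub_mem hmem hsH
          · intro h; exact (Finset.mem_filter.1 h).1
        have hsplit : A.filter (fun x => x + s ∉ A)
            = A₁.filter (fun x => x + s ∉ A) ∪ A₂.filter (fun x => x + s ∉ A) := by
          ext x
          simp only [Finset.mem_union, Finset.mem_filter, hA₁, hA₂]
          tauto
        have hdisj : Disjoint (A₁.filter (fun x => x + s ∉ A)) (A₂.filter (fun x => x + s ∉ A)) := by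
          refine Finset.disjoint_filter_filter ?_
          rw [Finset.disjoint_left]
          intro x h1 h2
          exact (Finset.mem_filter.1 h2).2 (Finset.mem_filter.1 h1).2
        rw [hsplit, Finset.card_union_of_disjoint hdisj]
        congr 1
        · exact congrArg _ (Finset.filter_congr (fun x hx => not_congr (hiff1 x hx)))
        · exact congrArg _ (Finset.filter_congr (fun x hx => not_congr (hiff2 x hx)))
      -- apply IH to both parts
      have k1 := IH A₁ hA₁ss
      have k2 := IH A₂ hA₂ss
      set N : ℝ := (Nat.card (closure (L : Set G)) : ℝ) with hN
      have hNpos' : (0:ℝ) < N := by rw [hN]; exact_mod_cast hNpos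
      have hApos : 0 < A.card := Finset.card_pos.2 ⟨a, ha⟩
      have hmono1 : (A₁.card : ℝ) * Real.logb p (N / (A.card : ℝ))
          ≤ (A₁.card : ℝ) * Real.logb p (N / (A₁.card : ℝ)) := by
        refine mul_le_mul_of_nonneg_left ?_ (by positivity)
        refine Real.logb_le_logb_of_le hp1
          (div_pos hNpos' (by exact_mod_cast hApos)) ?_
        apply div_le_div_of_nonneg_left hNpos'.le (by exact_mod_cast h1pos)
        exact_mod_cast Finset.card_le_card hA₁ss.subset
      have hmono2 : (A₂.card : ℝ) * Real.logb p (N / (A.card : ℝ))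
          ≤ (A₂.card : ℝ) * Real.logb p (N / (A₂.card : ℝ)) := by
        refine mul_le_mul_of_nonneg_left ?_ (by positivity)
        refine Real.logb_le_logb_of_le hp1
          (div_pos hNpos' (by exact_mod_cast hApos)) ?_
        apply div_le_div_of_nonneg_left hNpos'.le (by exact_mod_cast h2pos)
        exact_mod_cast Finset.card_le_card hA₂ss.subset
      have hcast : (A.card : ℝ) = (A₁.card : ℝ) + (A₂.card : ℝ) := by exact_mod_cast hcards
      have hsum : ∑ s ∈ L, ((A.filter (fun x => x + s ∉ A)).card : ℝ)
          = ∑ s ∈ L, ((A₁.filter (fun x => x + s ∉ A₁)).card : ℝ)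
            + ∑ s ∈ L, ((A₂.filter (fun x => x + s ∉ A₂)).card : ℝ) := by
        rw [← Finset.sum_add_distrib]
        refine Finset.sum_congr rfl (fun s hs => ?_)
        have := hbd s hs
        push_cast [this]
        ring
      calc (A.card : ℝ) * Real.logb p (N / (A.card : ℝ))
          = (A₁.card : ℝ) * Real.logb p (N / (A.card : ℝ))
            + (A₂.card : ℝ) * Real.logb p (N / (A.card : ℝ)) := by rw [hcast]; ring
        _ ≤ (A₁.card : ℝ) * Real.logb p (N / (A₁.card : ℝ))
            + (A₂.card : ℝ) * Real.logb p (N / (A₂.card : ℝ)) := add_le_add hmono1 hmono2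
        _ ≤ (∑ s ∈ L, ((A₁.filter (fun a => a + s ∉ A₁)).card : ℝ))
            + ∑ s ∈ L, ((A₂.filter (fun a => a + s ∉ A₂)).card : ℝ) := add_le_add k1 k2
        _ = ∑ s ∈ L, ((A.filter (fun a => a + s ∉ A)).card : ℝ) := hsum.symm


/-- **Corollary (cosetdecomp).** Let `G` be an abelian group of exponent `2` or `3`, and
let `A, S ⊆ G` be finite non-empty subsets. Let `H = ⟨S⟩` and let `n = rk H`, i.e.
`H ≅ C_p^n` where `p = exp G`. If `γ ∈ (0,1]` and `∂_S(A) ≤ (1-γ)·n·|A|`, then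
`|A| ≥ |H|^γ`. -/
theorem isoperimetric_coset_decomp {G : Type*} [AddCommGroup G] [DecidableEq G]
    (p : ℕ) (hp : p = 2 ∨ p = 3) (hexp : AddMonoid.exponent G = p)
    (S : Finset G) (hS : S.Nonempty)
    (A : Finset G) (hA : A.Nonempty)
    (n : ℕ) (hH : Nonempty (AddSubgroup.closure (S : Set G) ≃+ (Fin n → ZMod p)))
    (γ : ℝ) (hγ0 : 0 < γ) (hγ1 : γ ≤ 1)
    (hbd : (edgeBoundary A S : ℝ) ≤ (1 - γ) * n * A.card) :
    (Nat.card (AddSubgroup.closure (S : Set G)) : ℝ) ^ γ ≤ A.card := by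
  classical
  have hp1 : (1:ℝ) < (p:ℝ) := by rcases hp with rfl | rfl <;> norm_num
  have hp0 : (0:ℝ) < (p:ℝ) := lt_trans one_pos hp1
  have htor : ∀ g : G, p • g = 0 := by
    intro g; rw [← hexp]; exact AddMonoid.exponent_nsmul_eq_zero g
  obtain ⟨e⟩ := hH
  -- cardinality of the subgroup
  have hcard : Nat.card (AddSubgroup.closure (S : Set G)) = p ^ n := by
    rw [Nat.card_congr e.toEquiv, Nat.card_pi]
    simp [Nat.card_zmod]
  have hApos : 0 < A.card := Finset.card_pos.2 hA
  have hAposR : (0:ℝ) < (A.card : ℝ) := by exact_mod_cast hApos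
  -- main inequality
  have hmain := main_all p hp htor S A
  have hEB : (edgeBoundary A S : ℝ) = ∑ s ∈ S, ((A.filter (fun a => a + s ∉ A)).card : ℝ) := by
    rw [edgeBoundary, edgeBoundary_eq_sum']
    push_cast; rfl
  have h1 : (A.card : ℝ) * Real.logb p ((Nat.card (AddSubgroup.closure (S : Set G)) : ℝ)
      / (A.card : ℝ)) ≤ (1 - γ) * n * A.card := by
    calc _ ≤ ∑ s ∈ S, ((A.filter (fun a => a + s ∉ A)).card : ℝ) := hmain
      _ = (edgeBoundary A S : ℝ) := hEB.symm
      _ ≤ (1 - γ) * n * A.card := hbd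
  -- unfold the logb of the quotient
  have hNcast : ((Nat.card (AddSubgroup.closure (S : Set G)) : ℕ) : ℝ) = (p:ℝ) ^ n := by
    rw [hcard]; push_cast; ring
  have h2 : Real.logb p ((p:ℝ) ^ n / (A.card : ℝ)) ≤ (1 - γ) * n := by
    have := h1
    rw [hNcast] at this
    have h3 : (A.card : ℝ) * Real.logb p ((p:ℝ) ^ n / (A.card : ℝ))
        = Real.logb p ((p:ℝ) ^ n / (A.card : ℝ)) * A.card := by ring
    rw [h3] at this
    exact le_of_mul_le_mul_right this hAposR
  have h4 : Real.logb p ((p:ℝ) ^ n / (A.card : ℝ))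
      = n - Real.logb p (A.card : ℝ) := by
    rw [Real.logb_div (by positivity) (ne_of_gt hAposR), Real.logb_pow,
      Real.logb_self_eq_one hp1, mul_one]
  have h5 : γ * n ≤ Real.logb p (A.card : ℝ) := by
    rw [h4] at h2
    nlinarith [h2]
  calc (Nat.card (AddSubgroup.closure (S : Set G)) : ℝ) ^ γ
      = ((p:ℝ) ^ n) ^ γ := by rw [hNcast]
    _ = (p:ℝ) ^ ((n:ℝ) * γ) := by
        rw [← Real.rpow_natCast (p:ℝ) n, ← Real.rpow_mul hp0.le]
    _ ≤ (p:ℝ) ^ Real.logb p (A.card : ℝ) := by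
        apply Real.rpow_le_rpow_of_exponent_le hp1.le
        calc (n:ℝ) * γ = γ * n := by ring
          _ ≤ Real.logb p (A.card : ℝ) := h5
    _ = (A.card : ℝ) := Real.rpow_logb hp0 (ne_of_gt hp1) hAposR
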